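/- Let A be an irreducible N×N matrix over ℝ ∪ {+∞} whose graph contains at least one circuit, let λ be the minimum average circuit weight of G(A), let Â be the normalised matrix with Â_{ij} = A_{ij} − λ whenever A_{ij} ≠ +∞ (and Â_{ij} = +∞ otherwise), and let Â* = ⊖_{k=0}^{N−1} Â^{⊙k} be its Kleene star. If node i lies on a circuit of G(A) of average weight λ (i.e., i belongs to the critical graph of A), then the i-th column v = (Â*)_{·i} is a finite real vector satisfying min_j (A_{kj} + v_j) = λ + v_k for all k; that is, it is a min-plus eigenvector of A with eigenvalue λ. -/

import Mathlib

open scoped BigOperators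

/-- Min-plus product of matrices over ℝ ∪ {+∞}: `(A ⊙ B) i j = min_k (A i k + B k j)`. -/
def mpMul {N : ℕ} (A B : Matrix (Fin N) (Fin N) (WithTop ℝ)) :
    Matrix (Fin N) (Fin N) (WithTop ℝ) :=
  fun i j => Finset.univ.inf fun k => A i k + B k j

/-- The min-plus identity matrix: `0` on the diagonal, `+∞` elsewhere. -/
def mpId {N : ℕ} : Matrix (Fin N) (Fin N) (WithTop ℝ) :=
  fun i j => if i = j then 0 else ⊤

/-- Min-plus matrix powers. -/
def mpPow {N : ℕ} (A : Matrix (Fin N) (Fin N) (WithTop ℝ)) : ℕ → Matrix (Fin N) (Fin N) (WithTop ℝ)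
  | 0 => mpId
  | k + 1 => mpMul A (mpPow A k)

/-- `IsWalk A l v j i` : `v` is a walk of length `l` from node `j` to node `i` in the
weighted digraph `G(A)`, where there is an edge from `b` to `a` whenever `A a b ≠ +∞`. -/
def IsWalk {N : ℕ} (A : Matrix (Fin N) (Fin N) (WithTop ℝ)) (l : ℕ)
    (v : Fin (l + 1) → Fin N) (j i : Fin N) : Prop :=
  v 0 = j ∧ v (Fin.last l) = i ∧ ∀ t : Fin l, A (v t.succ) (v t.castSucc) ≠ ⊤

/-- The weight of a walk: the sum of the weights of its edges. -/
def walkWeight {N : ℕ} (A : Matrix (Fin N) (Fin N) (WithTop ℝ)) (l : ℕ)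
    (v : Fin (l + 1) → Fin N) : WithTop ℝ :=
  ∑ t : Fin l, A (v t.succ) (v t.castSucc)

/-- The normalised matrix `Â` with `Â i j = A i j - lam` (and `+∞` stays `+∞`). -/
def normalised {N : ℕ} (A : Matrix (Fin N) (Fin N) (WithTop ℝ)) (lam : ℝ) :
    Matrix (Fin N) (Fin N) (WithTop ℝ) :=
  fun i j => A i j + ((-lam : ℝ) : WithTop ℝ)

/-- The Kleene star `Â* = ⊖_{k=0}^{N-1} Â^{⊙k}` (entrywise minimum). -/
def kleeneStar {N : ℕ} (B : Matrix (Fin N) (Fin N) (WithTop ℝ)) :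
    Matrix (Fin N) (Fin N) (WithTop ℝ) :=
  fun i j => (Finset.range N).inf fun k => mpPow B k i j

open Finset

/-- weight of a ℕ-indexed walk -/
def Wt {N : ℕ} (B : Matrix (Fin N) (Fin N) (WithTop ℝ)) (l : ℕ) (c : ℕ → Fin N) : WithTop ℝ :=
  ∑ t ∈ Finset.range l, B (c (t+1)) (c t)

lemma mp_add_inf {α : Type*} (b : WithTop ℝ) (s : Finset α) (f : α → WithTop ℝ) :
    b + s.inf f = s.inf fun x => b + f x := by
  induction s using Finset.cons_induction with
  | empty => simpa using add_top b
  | cons a s ha ih =>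
      rw [Finset.inf_cons, Finset.inf_cons, ← ih,
        min_add_add_left]

lemma mp_inf_add {α : Type*} (b : WithTop ℝ) (s : Finset α) (f : α → WithTop ℝ) :
    s.inf f + b = s.inf fun x => f x + b := by
  rw [add_comm, mp_add_inf]
  exact Finset.inf_congr rfl fun a _ => add_comm _ _

lemma pow_le_Wt {N : ℕ} (B : Matrix (Fin N) (Fin N) (WithTop ℝ)) (l : ℕ) (c : ℕ → Fin N) :
    mpPow B l (c l) (c 0) ≤ Wt B l c := by
  induction l with
  | zero => simp [mpPow, mpId, Wt]
  | succ l ih =>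
      show mpMul B (mpPow B l) (c (l+1)) (c 0) ≤ _
      calc univ.inf (fun k => B (c (l+1)) k + mpPow B l k (c 0))
          ≤ B (c (l+1)) (c l) + mpPow B l (c l) (c 0) := Finset.inf_le (mem_univ _)
        _ ≤ B (c (l+1)) (c l) + Wt B l c := add_le_add_right ih _
        _ = Wt B (l+1) c := by rw [Wt, Wt, Finset.sum_range_succ, add_comm]

lemma mp_attain {N : ℕ} (hN : 0 < N) (B : Matrix (Fin N) (Fin N) (WithTop ℝ)) (l : ℕ)
    (i j : Fin N) :
    mpPow B l i j = ⊤ ∨ ∃ c : ℕ → Fin N, c 0 = j ∧ c l = i ∧ Wt B l c = mpPow B l i j := by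
  induction l generalizing i with
  | zero =>
      by_cases h : i = j
      · subst h; exact Or.inr ⟨fun _ => i, rfl, rfl, by simp [Wt, mpPow, mpId]⟩
      · left; simp [mpPow, mpId, h]
  | succ l ih =>
      obtain ⟨k₀, -, hk₀⟩ := Finset.exists_mem_eq_inf Finset.univ
        (Finset.univ_nonempty_iff.2 (Fin.pos_iff_nonempty.1 hN))
        (fun k => B i k + mpPow B l k j)
      have hval : mpPow B (l+1) i j = B i k₀ + mpPow B l k₀ j := hk₀
      by_cases htop : B i k₀ + mpPow B l k₀ j = ⊤
      · left; rw [hval, htop]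
      · right
        have h1 := WithTop.add_ne_top.1 htop
        rcases ih k₀ with h | ⟨c, hc0, hcl, hw⟩
        · exact absurd h h1.2
        · refine ⟨fun t => if t ≤ l then c t else i, ?_, ?_, ?_⟩
          · simp [hc0]
          · simp
          · rw [Wt, Finset.sum_range_succ]
            have e1 : ∑ t ∈ range l,
                B ((fun t => if t ≤ l then c t else i) (t+1))
                  ((fun t => if t ≤ l then c t else i) t) = Wt B l c := by
              apply Finset.sum_congr rfl
              intro t ht
              rw [Finset.mem_range] at ht
              show B (if t + 1 ≤ l then c (t+1) else i) (if t ≤ l then c t else i) = _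
              rw [if_pos (show t + 1 ≤ l by omega), if_pos (show t ≤ l by omega)]
            rw [e1, hval]
            simp only [if_pos (le_refl l), if_neg (by omega : ¬ l + 1 ≤ l), hcl, hw]
            exact add_comm _ _

lemma mp_pow_add_le {N : ℕ} (B : Matrix (Fin N) (Fin N) (WithTop ℝ)) (a b : ℕ)
    (i j k : Fin N) :
    mpPow B (b + a) i j ≤ mpPow B b i k + mpPow B a k j := by
  induction b generalizing i with
  | zero =>
      by_cases h : i = k
      · subst h; simp [mpPow, mpId]
      · simp [mpPow, mpId, h, top_add]
  | succ b ih =>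
      have hbe : b + 1 + a = (b + a) + 1 := by omega
      rw [hbe]
      show mpMul B (mpPow B (b+a)) i j ≤ mpMul B (mpPow B b) i k + mpPow B a k j
      rw [mpMul, mpMul, mp_inf_add]
      apply Finset.le_inf
      intro k' _
      calc univ.inf (fun k'' => B i k'' + mpPow B (b+a) k'' j)
          ≤ B i k' + mpPow B (b+a) k' j := Finset.inf_le (mem_univ _)
        _ ≤ B i k' + (mpPow B b k' k + mpPow B a k j) := add_le_add_right (ih k') _
        _ = B i k' + mpPow B b k' k + mpPow B a k j := (add_assoc _ _ _).symm

lemma kstar_le_pow {N : ℕ} (hN : 0 < N) (B : Matrix (Fin N) (Fin N) (WithTop ℝ))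
    (hcirc : ∀ (m : ℕ) (c : ℕ → Fin N), 1 ≤ m → c m = c 0 → (0 : WithTop ℝ) ≤ Wt B m c) :
    ∀ (l : ℕ) (i j : Fin N), kleeneStar B i j ≤ mpPow B l i j := by
  intro l
  induction l using Nat.strong_induction_on with
  | _ l ih =>
  intro i j
  by_cases hl : l < N
  · exact Finset.inf_le (Finset.mem_range.2 hl)
  push_neg at hl
  by_cases htop : mpPow B l i j = ⊤
  · rw [htop]; exact le_top
  rcases mp_attain hN B l i j with h | ⟨c, hc0, hcl, hw⟩
  · exact absurd h htop
  -- pigeonhole: a repeated vertex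
  obtain ⟨t1, t2, hne, heq⟩ := Fintype.exists_ne_map_eq_of_card_lt
    (fun t : Fin (l+1) => c t.val) (by simp; omega)
  obtain ⟨a, b, hab, hbl, hcc⟩ : ∃ a b : ℕ, a < b ∧ b ≤ l ∧ c a = c b := by
    rcases lt_or_gt_of_ne hne with h | h
    · exact ⟨t1.val, t2.val, h, Nat.lt_succ_iff.1 t2.isLt, heq⟩
    · exact ⟨t2.val, t1.val, h, Nat.lt_succ_iff.1 t1.isLt, heq.symm⟩
  set d := b - a with hd
  have hd1 : 1 ≤ d := by omega
  have hdl : d ≤ l := by omega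
  have hadb : a + d = b := by omega
  -- the spliced walk
  set c' : ℕ → Fin N := fun t => if t ≤ a then c t else c (t + d) with hc'
  have hmid0 : c (a + (d + 0)) = c (a + 0) := by
    simpa [hadb] using hcc.symm
  -- sum decomposition of Wt B l c
  have hldecomp : l = a + (d + (l - b)) := by omega
  have hWl : Wt B l c =
      (∑ t ∈ Finset.range a, B (c (t+1)) (c t)) +
      (Wt B d (fun s => c (a + s)) + ∑ s ∈ Finset.range (l - b), B (c (a + (d + s) + 1)) (c (a + (d + s)))) := by
    rw [Wt]
    conv_lhs => rw [hldecomp]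
    rw [Finset.sum_range_add]
    congr 1
    rw [Finset.sum_range_add]
    rfl
  have hWl' : Wt B (l - d) c' =
      (∑ t ∈ Finset.range a, B (c (t+1)) (c t)) +
      (∑ s ∈ Finset.range (l - b), B (c (a + (d + s) + 1)) (c (a + (d + s)))) := by
    have hld : l - d = a + (l - b) := by omega
    rw [Wt]
    conv_lhs => rw [hld]
    rw [Finset.sum_range_add]
    congr 1
    · apply Finset.sum_congr rfl
      intro t ht
      rw [Finset.mem_range] at ht
      show B (if t + 1 ≤ a then c (t+1) else c (t+1+d)) (if t ≤ a then c t else c (t+d)) = _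
      rw [if_pos (show t + 1 ≤ a by omega), if_pos (show t ≤ a by omega)]
    · apply Finset.sum_congr rfl
      intro s _
      show B (if a + s + 1 ≤ a then c (a+s+1) else c (a+s+1+d)) (if a + s ≤ a then c (a+s) else c (a+s+d)) = _
      rw [if_neg (show ¬ a + s + 1 ≤ a by omega)]
      rcases Nat.eq_zero_or_pos s with rfl | hs
      · rw [if_pos (by omega), show a + 0 + 1 + d = a + (d + 0) + 1 by omega, hmid0]
      · rw [if_neg (by omega)]
        congr 2 <;> omega
  have hmidnn : (0 : WithTop ℝ) ≤ Wt B d (fun s => c (a + s)) :=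
    hcirc d _ hd1 (by simpa [hadb] using hcc.symm)
  have hle : Wt B (l - d) c' ≤ Wt B l c := by
    rw [hWl, hWl']
    apply add_le_add_right
    calc ∑ s ∈ Finset.range (l - b), B (c (a + (d + s) + 1)) (c (a + (d + s)))
        = 0 + _ := (zero_add _).symm
      _ ≤ Wt B d (fun s => c (a + s)) + _ := add_le_add_left hmidnn _
  -- endpoints of c'
  have he0 : c' 0 = j := by
    show (if 0 ≤ a then c 0 else c (0 + d)) = j
    rw [if_pos (Nat.zero_le a), hc0]
  have he1 : c' (l - d) = i := by
    show (if l - d ≤ a then c (l - d) else c (l - d + d)) = i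
    by_cases h : l - d ≤ a
    · rw [if_pos h]
      have hae : a = l - d := by omega
      have hbe : b = l := by omega
      rw [← hae, hcc, hbe, hcl]
    · rw [if_neg h]
      rw [show l - d + d = l by omega, hcl]
  calc kleeneStar B i j ≤ mpPow B (l - d) i j := ih (l - d) (by omega) i j
    _ = mpPow B (l - d) (c' (l - d)) (c' 0) := by rw [he0, he1]
    _ ≤ Wt B (l - d) c' := pow_le_Wt B (l - d) c'
    _ ≤ Wt B l c := hle
    _ = mpPow B l i j := hw

/-- extend a `Fin`-indexed walk to a ℕ-indexed one -/
def mpExt {N l : ℕ} (c : Fin (l+1) → Fin N) : ℕ → Fin N :=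
  fun t => c ⟨min t l, by omega⟩

lemma mpExt_apply {N l : ℕ} (c : Fin (l+1) → Fin N) {t : ℕ} (h : t ≤ l) :
    mpExt c t = c ⟨t, by omega⟩ := by
  unfold mpExt
  congr 1
  exact Fin.ext (by simpa using h)

lemma walkWeight_eq_Wt {N : ℕ} (A : Matrix (Fin N) (Fin N) (WithTop ℝ)) (l : ℕ)
    (c : Fin (l+1) → Fin N) : walkWeight A l c = Wt A l (mpExt c) := by
  rw [walkWeight, Wt,
    ← Fin.sum_univ_eq_sum_range (fun t => A ((mpExt c) (t+1)) ((mpExt c) t)) l]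
  apply Finset.sum_congr rfl
  intro t _
  have h1 : mpExt c (t.val + 1) = c t.succ := by
    rw [mpExt_apply c (by omega : t.val + 1 ≤ l)]
    exact congrArg c (Fin.ext (by simp))
  have h2 : mpExt c t.val = c t.castSucc := by
    rw [mpExt_apply c (by omega : t.val ≤ l)]
    exact congrArg c (Fin.ext (by simp))
  rw [h1, h2]

lemma Wt_eq_walkWeight {N : ℕ} (A : Matrix (Fin N) (Fin N) (WithTop ℝ)) (m : ℕ)
    (c : ℕ → Fin N) : Wt A m c = walkWeight A m (fun t : Fin (m+1) => c t.val) := by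
  rw [walkWeight, Wt, ← Fin.sum_univ_eq_sum_range (fun t => A (c (t+1)) (c t)) m]
  apply Finset.sum_congr rfl
  intro t _
  simp [Fin.val_succ, Fin.coe_castSucc]

lemma Wt_normalised {N : ℕ} (A : Matrix (Fin N) (Fin N) (WithTop ℝ)) (lam : ℝ) (l : ℕ)
    (c : ℕ → Fin N) :
    Wt (normalised A lam) l c = Wt A l c + (((l : ℝ) * (-lam) : ℝ) : WithTop ℝ) := by
  induction l with
  | zero => simp [Wt]
  | succ l ih =>
      have hL : Wt (normalised A lam) (l+1) c
          = Wt (normalised A lam) l c + normalised A lam (c (l+1)) (c l) :=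
        Finset.sum_range_succ _ _
      have hR : Wt A (l+1) c = Wt A l c + A (c (l+1)) (c l) := Finset.sum_range_succ _ _
      rw [hL, hR, ih]
      show _ + (A (c (l+1)) (c l) + ((-lam : ℝ) : WithTop ℝ)) = _
      have hc : ((((l+1 : ℕ) : ℝ) * (-lam) : ℝ) : WithTop ℝ)
          = (((l : ℝ) * (-lam) : ℝ) : WithTop ℝ) + ((-lam : ℝ) : WithTop ℝ) := by
        rw [← WithTop.coe_add]
        congr 1
        push_cast
        ring
      rw [hc]
      abel

/-- for irreducible `A` (graph containing a circuit) with minimum average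
circuit weight `lam`, if node `i₀` lies on a critical circuit (a circuit of average weight
`lam`), then the `i₀`-th column of the Kleene star of the normalised matrix `Â` is a finite
min-plus eigenvector of `A` with eigenvalue `lam`. -/
theorem critical_column_of_kleene_star_is_eigenvector {N : ℕ}
    (A : Matrix (Fin N) (Fin N) (WithTop ℝ))
    (hirr : ∀ i j : Fin N, ∃ (l : ℕ) (p : Fin (l + 1) → Fin N), IsWalk A l p i j)
    (lam : ℝ)
    (hlb : ∀ (m : ℕ) (i : Fin N) (c : Fin (m + 1) → Fin N), 1 ≤ m → IsWalk A m c i i →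
      (((m : ℝ) * lam : ℝ) : WithTop ℝ) ≤ walkWeight A m c)
    (hmin : ∃ (m : ℕ) (i : Fin N) (c : Fin (m + 1) → Fin N), 1 ≤ m ∧ IsWalk A m c i i ∧
      walkWeight A m c = (((m : ℝ) * lam : ℝ) : WithTop ℝ))
    (i₀ : Fin N)
    (hcrit : ∃ (m : ℕ) (c : Fin (m + 1) → Fin N), 1 ≤ m ∧ IsWalk A m c (c 0) (c 0) ∧
      walkWeight A m c = (((m : ℝ) * lam : ℝ) : WithTop ℝ) ∧ ∃ t : Fin (m + 1), c t = i₀) :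
    ∃ v : Fin N → ℝ,
      (∀ j : Fin N, (v j : WithTop ℝ) = kleeneStar (normalised A lam) j i₀) ∧
      (∀ k : Fin N,
        Finset.univ.inf (fun j => A k j + (v j : WithTop ℝ)) =
          ((lam + v k : ℝ) : WithTop ℝ)) := by
  set B := normalised A lam with hB
  have hN : 0 < N := i₀.pos
  have hBA : ∀ i j : Fin N, B i j = ⊤ ↔ A i j = ⊤ := by
    intro i j
    simp [hB, normalised, WithTop.add_eq_top]
  -- all circuits of B have nonnegative weight
  have hcirc : ∀ (m : ℕ) (c : ℕ → Fin N), 1 ≤ m → c m = c 0 → (0 : WithTop ℝ) ≤ Wt B m c := by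
    intro m c hm hcm
    by_cases htop : ∀ t : Fin m, A (c (t.val + 1)) (c t.val) ≠ ⊤
    · have hwalk : IsWalk A m (fun t : Fin (m+1) => c t.val) (c 0) (c 0) := by
        refine ⟨rfl, ?_, fun t => htop t⟩
        show c (Fin.last m).val = c 0
        rw [Fin.val_last, hcm]
      have h1 := hlb m (c 0) _ hm hwalk
      rw [← Wt_eq_walkWeight] at h1
      rw [hB, Wt_normalised]
      calc (0 : WithTop ℝ)
          = (((m : ℝ) * lam : ℝ) : WithTop ℝ) + (((m : ℝ) * (-lam) : ℝ) : WithTop ℝ) := by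
            rw [← WithTop.coe_add]
            norm_num
        _ ≤ Wt A m c + (((m : ℝ) * (-lam) : ℝ) : WithTop ℝ) := add_le_add_left h1 _
    · push_neg at htop
      obtain ⟨t, ht⟩ := htop
      have : Wt B m c = ⊤ := by
        apply WithTop.sum_eq_top.2
        exact ⟨t.val, Finset.mem_range.2 t.isLt, by simp [hB, normalised, ht]⟩
      rw [this]
      exact le_top
  have hshort := kstar_le_pow hN B hcirc
  -- finiteness of the i₀ column
  have hfin : ∀ j : Fin N, kleeneStar B j i₀ ≠ ⊤ := by
    intro j
    obtain ⟨l, p, hp0, hpl, hpe⟩ := hirr i₀ j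
    have h1 : Wt B l (mpExt p) ≠ ⊤ := by
      apply WithTop.sum_ne_top.2
      intro t ht
      rw [Finset.mem_range] at ht
      have e1 : mpExt p (t + 1) = p (⟨t, ht⟩ : Fin l).succ := by
        rw [mpExt_apply p (by omega : t + 1 ≤ l)]
        exact congrArg p (Fin.ext (by simp))
      have e2 : mpExt p t = p (⟨t, ht⟩ : Fin l).castSucc := by
        rw [mpExt_apply p (by omega : t ≤ l)]
        exact congrArg p (Fin.ext (by simp))
      rw [e1, e2, ne_eq, hBA]
      exact hpe ⟨t, ht⟩
    have h2 : mpPow B l j i₀ ≤ Wt B l (mpExt p) := by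
      have h3 := pow_le_Wt B l (mpExt p)
      have e0 : mpExt p 0 = i₀ := by
        rw [mpExt_apply p (Nat.zero_le l)]
        rw [← hp0]
        exact congrArg p (Fin.ext (by simp))
      have el : mpExt p l = j := by
        rw [mpExt_apply p (le_refl l)]
        rw [← hpl]
        exact congrArg p (Fin.ext (by simp [Fin.last]))
      rwa [e0, el] at h3
    exact ne_top_of_le_ne_top h1 (le_trans (hshort l j i₀) h2)
  -- a critical circuit through i₀ gives a zero-weight diagonal power
  obtain ⟨m, c, hm, hw, hwt, t, hti⟩ := hcrit
  have hm0 : ∃ m' : ℕ, 1 ≤ m' ∧ mpPow B m' i₀ i₀ ≤ 0 := by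
    refine ⟨m, hm, ?_⟩
    set cN := mpExt c with hcN
    have h0 : Wt B m cN = 0 := by
      rw [hB, Wt_normalised, ← walkWeight_eq_Wt, hwt, ← WithTop.coe_add]
      norm_num
    set t0 := t.val with ht0def
    have ht0 : t0 ≤ m := Nat.lt_succ_iff.1 t.isLt
    have hcNt0 : cN t0 = i₀ := by
      rw [hcN, mpExt_apply c ht0, ← hti]
    have hcN0 : cN 0 = c 0 := by
      rw [hcN, mpExt_apply c (Nat.zero_le m)]
      exact congrArg c (Fin.ext (by simp))
    have hcNm : cN m = c 0 := by
      rw [hcN, mpExt_apply c (le_refl m), ← hw.2.1]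
      exact congrArg c (Fin.ext (by simp [Fin.last]))
    have hsplit : Wt B t0 cN + Wt B (m - t0) (fun s => cN (t0 + s)) = Wt B m cN := by
      have hsum := Finset.sum_range_add (fun s => B (cN (s+1)) (cN s)) t0 (m - t0)
      rw [show t0 + (m - t0) = m by omega] at hsum
      rw [Wt, Wt, Wt, hsum]
      exact congrArg _ (Finset.sum_congr rfl fun x _ => rfl)
    have hA1 : mpPow B t0 i₀ (c 0) ≤ Wt B t0 cN := by
      have h3 := pow_le_Wt B t0 cN
      rwa [hcNt0, hcN0] at h3
    have hA2 : mpPow B (m - t0) (c 0) i₀ ≤ Wt B (m - t0) (fun s => cN (t0 + s)) := by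
      have h3 := pow_le_Wt B (m - t0) (fun s => cN (t0 + s))
      have e1 : cN (t0 + (m - t0)) = c 0 := by rw [show t0 + (m - t0) = m by omega, hcNm]
      have e2 : cN (t0 + 0) = i₀ := by rw [Nat.add_zero, hcNt0]
      simp only [e1, e2] at h3
      exact h3
    calc mpPow B m i₀ i₀ = mpPow B (t0 + (m - t0)) i₀ i₀ := by rw [Nat.add_sub_cancel' ht0]
      _ ≤ mpPow B t0 i₀ (c 0) + mpPow B (m - t0) (c 0) i₀ := mp_pow_add_le B (m - t0) t0 i₀ i₀ (c 0)
      _ ≤ Wt B t0 cN + Wt B (m - t0) (fun s => cN (t0 + s)) := add_le_add hA1 hA2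
      _ = 0 := by rw [hsplit, h0]
  obtain ⟨m', hm'1, hm'0⟩ := hm0
  -- the key fixed point property
  have key : ∀ k : Fin N,
      Finset.univ.inf (fun j => B k j + kleeneStar B j i₀) = kleeneStar B k i₀ := by
    intro k
    apply le_antisymm
    · conv_rhs => rw [kleeneStar]
      apply Finset.le_inf
      intro l _
      cases l with
      | zero =>
          by_cases hk : k = i₀
          · rw [hk]
            have h1 : Finset.univ.inf (fun j => B i₀ j + kleeneStar B j i₀)
                ≤ Finset.univ.inf (fun j => B i₀ j + mpPow B (m' - 1) j i₀) :=
              Finset.inf_mono_fun fun j _ => add_le_add_right (hshort (m' - 1) j i₀) _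
            have h2 : Finset.univ.inf (fun j => B i₀ j + mpPow B (m' - 1) j i₀)
                = mpPow B (m' - 1 + 1) i₀ i₀ := rfl
            have h3 : m' - 1 + 1 = m' := by omega
            rw [h2, h3] at h1
            refine le_trans (le_trans h1 hm'0) ?_
            simp [mpPow, mpId]
          · show _ ≤ mpId k i₀
            simp [mpId, hk]
      | succ l =>
          have h1 : Finset.univ.inf (fun j => B k j + kleeneStar B j i₀)
              ≤ Finset.univ.inf (fun j => B k j + mpPow B l j i₀) :=
            Finset.inf_mono_fun fun j _ => add_le_add_right (hshort l j i₀) _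
          exact h1
    · apply Finset.le_inf
      intro j _
      conv_rhs => rw [kleeneStar]
      rw [mp_add_inf]
      apply Finset.le_inf
      intro l _
      calc kleeneStar B k i₀ ≤ mpPow B (l+1) k i₀ := hshort (l+1) k i₀
        _ ≤ B k j + mpPow B l j i₀ := Finset.inf_le (Finset.mem_univ j)
  -- assemble
  refine ⟨fun j => (kleeneStar B j i₀).untop (hfin j), fun j => WithTop.coe_untop _ _, ?_⟩
  intro k
  have hvj : ∀ j : Fin N, (((kleeneStar B j i₀).untop (hfin j) : ℝ) : WithTop ℝ)
      = kleeneStar B j i₀ := fun j => WithTop.coe_untop _ _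
  calc Finset.univ.inf (fun j => A k j + (((kleeneStar B j i₀).untop (hfin j) : ℝ) : WithTop ℝ))
      = Finset.univ.inf (fun j => (lam : WithTop ℝ) + (B k j + kleeneStar B j i₀)) := by
        apply Finset.inf_congr rfl
        intro j _
        rw [hvj j]
        show A k j + kleeneStar B j i₀ = _
        rw [hB]
        show A k j + kleeneStar B j i₀
            = (lam : WithTop ℝ) + (A k j + ((-lam : ℝ) : WithTop ℝ) + kleeneStar B j i₀)
        cases hAkj : A k j with
        | top => simp [top_add, add_top]
        | coe a =>
            cases hks : kleeneStar B j i₀ with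
            | top => simp [top_add, add_top]
            | coe x =>
                rw [← WithTop.coe_add, ← WithTop.coe_add, ← WithTop.coe_add,
                  ← WithTop.coe_add, WithTop.coe_inj]
                ring
    _ = (lam : WithTop ℝ) + Finset.univ.inf (fun j => B k j + kleeneStar B j i₀) :=
        (mp_add_inf _ _ _).symm
    _ = (lam : WithTop ℝ) + kleeneStar B k i₀ := by rw [key k]
    _ = ((lam + (kleeneStar B k i₀).untop (hfin k) : ℝ) : WithTop ℝ) := by
        rw [WithTop.coe_add, hvj k]
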